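/- Let σ be an alternating bilinear form on V that tames J, and let K : V → V be a linear map with K ∘ K = −id whose operator norm distance to J satisfies ‖K − J‖ · β(σ) < α(σ) (i.e. ‖K − J‖ < γ(σ)). Then σ tames K, i.e. σ(x, Kx) > 0 for every x ≠ 0. -/

import Mathlib

/-- `α(σ) = inf{σ(x,Jx) : ‖x‖ = 1}` for a bilinear form `σ` and `J : V → V`. -/
noncomputable def alphaT {V : Type*} [NormedAddCommGroup V] [InnerProductSpace ℝ V]
    (J : V → V) (σ : V →ₗ[ℝ] V →ₗ[ℝ] ℝ) : ℝ :=
  sInf {r : ℝ | ∃ x : V, ‖x‖ = 1 ∧ r = σ x (J x)}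

/-- `β(σ) = sup{σ(x,y)/√(‖x‖²‖y‖² − ⟨x,y⟩²) : x, y linearly independent}`. -/
noncomputable def betaT {V : Type*} [NormedAddCommGroup V] [InnerProductSpace ℝ V]
    (σ : V →ₗ[ℝ] V →ₗ[ℝ] ℝ) : ℝ :=
  sSup {r : ℝ | ∃ x y : V, LinearIndependent ℝ ![x, y] ∧
    r = σ x y / Real.sqrt (‖x‖ ^ 2 * ‖y‖ ^ 2 - (inner ℝ x y : ℝ) ^ 2)}

/-- `γ(σ) = α(σ)/β(σ)`. -/
noncomputable def gammaT {V : Type*} [NormedAddCommGroup V] [InnerProductSpace ℝ V]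
    (J : V → V) (σ : V →ₗ[ℝ] V →ₗ[ℝ] ℝ) : ℝ :=
  alphaT J σ / betaT σ

/-- Gram-determinant identity for the orthogonal decomposition. -/
lemma auxD {V : Type*} [NormedAddCommGroup V] [InnerProductSpace ℝ V]
    (a b : V) (ha : a ≠ 0) :
    ‖a‖ ^ 2 * ‖b‖ ^ 2 - (inner ℝ a b : ℝ) ^ 2
      = (‖a‖ * ‖b - ((inner ℝ a b : ℝ) / ‖a‖ ^ 2) • a‖) ^ 2 := by
  have hna : (0:ℝ) < ‖a‖ := norm_pos_iff.mpr ha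
  set c : ℝ := (inner ℝ a b : ℝ) / ‖a‖ ^ 2 with hc
  have h1 : ‖b - c • a‖ ^ 2 = ‖b‖ ^ 2 - 2 * (c * (inner ℝ a b : ℝ)) + c ^ 2 * ‖a‖ ^ 2 := by
    rw [norm_sub_sq_real, real_inner_smul_right, real_inner_comm, norm_smul, mul_pow, Real.norm_eq_abs, sq_abs]
  have hia : (inner ℝ a a : ℝ) = ‖a‖ ^ 2 := real_inner_self_eq_norm_sq a
  rw [mul_pow, h1, hc]
  field_simp
  ring

lemma auxDpos {V : Type*} [NormedAddCommGroup V] [InnerProductSpace ℝ V]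
    (a b : V) (h : LinearIndependent ℝ ![a, b]) :
    0 < ‖a‖ ^ 2 * ‖b‖ ^ 2 - (inner ℝ a b : ℝ) ^ 2 := by
  have ha : a ≠ 0 := h.ne_zero 0
  have hz : b - ((inner ℝ a b : ℝ) / ‖a‖ ^ 2) • a ≠ 0 := by
    intro hz0
    exact ((LinearIndependent.pair_iff' ha).mp h) _ (sub_eq_zero.mp hz0).symm
  rw [auxD a b ha]
  have hna : (0:ℝ) < ‖a‖ := norm_pos_iff.mpr ha
  have hnz : (0:ℝ) < ‖b - ((inner ℝ a b : ℝ) / ‖a‖ ^ 2) • a‖ := norm_pos_iff.mpr hz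
  positivity

theorem stmt15 {V : Type*} [NormedAddCommGroup V] [InnerProductSpace ℝ V]
    [FiniteDimensional ℝ V]
    (J K : V →L[ℝ] V)
    (hiso : ∀ x : V, ‖J x‖ = ‖x‖) (hJsq : ∀ x : V, J (J x) = -x)
    (hKsq : ∀ x : V, K (K x) = -x)
    (σ : V →ₗ[ℝ] V →ₗ[ℝ] ℝ) (halt : ∀ x : V, σ x x = 0)
    (htame : ∀ x : V, x ≠ 0 → 0 < σ x (J x))
    (hnorm : ‖K - J‖ * betaT σ < alphaT (⇑J) σ) :
    ∀ x : V, x ≠ 0 → 0 < σ x (K x) := by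
  classical
  -- antisymmetry
  have hskew : ∀ a b : V, σ a b = - σ b a := by
    intro a b
    have h := halt (a + b)
    simp only [map_add, LinearMap.add_apply, halt] at h
    linarith
  -- operator norm bound for σ
  obtain ⟨C, hC⟩ : ∃ C : ℝ, ∀ a b : V, |σ a b| ≤ C * ‖a‖ * ‖b‖ := by
    let σ1 : V →ₗ[ℝ] (V →L[ℝ] ℝ) :=
      (LinearMap.toContinuousLinearMap : (V →ₗ[ℝ] ℝ) ≃ₗ[ℝ] (V →L[ℝ] ℝ)).toLinearMap.comp σ
    let σc : V →L[ℝ] (V →L[ℝ] ℝ) := LinearMap.toContinuousLinearMap σ1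
    refine ⟨‖σc‖, fun a b => ?_⟩
    have h1 : |σ a b| = ‖σc a b‖ := by
      simp [σc, σ1]
    rw [h1]
    calc ‖σc a b‖ ≤ ‖σc a‖ * ‖b‖ := (σc a).le_opNorm b
      _ ≤ ‖σc‖ * ‖a‖ * ‖b‖ := by
          have := σc.le_opNorm a
          have hb : (0:ℝ) ≤ ‖b‖ := norm_nonneg b
          nlinarith
  -- β bounded above
  have hbddA : BddAbove {r : ℝ | ∃ x y : V, LinearIndependent ℝ ![x, y] ∧
      r = σ x y / Real.sqrt (‖x‖ ^ 2 * ‖y‖ ^ 2 - (inner ℝ x y : ℝ) ^ 2)} := by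
    refine ⟨C, ?_⟩
    rintro r ⟨a, b, hli, rfl⟩
    have ha : a ≠ 0 := hli.ne_zero 0
    have hna : (0:ℝ) < ‖a‖ := norm_pos_iff.mpr ha
    set z : V := b - ((inner ℝ a b : ℝ) / ‖a‖ ^ 2) • a with hzdef
    have hz : z ≠ 0 := by
      intro hz0
      exact ((LinearIndependent.pair_iff' ha).mp hli) _ (sub_eq_zero.mp hz0).symm
    have hnz : (0:ℝ) < ‖z‖ := norm_pos_iff.mpr hz
    have hsz : σ a b = σ a z := by
      simp [hzdef, map_sub, map_smul, halt]
    rw [auxD a b ha, Real.sqrt_sq (by positivity)]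
    rw [div_le_iff₀ (by positivity)]
    calc σ a b = σ a z := hsz
      _ ≤ |σ a z| := le_abs_self _
      _ ≤ C * ‖a‖ * ‖z‖ := hC a z
      _ = C * (‖a‖ * ‖z‖) := by ring
  -- α bounded below
  have hbddB : BddBelow {r : ℝ | ∃ x : V, ‖x‖ = 1 ∧ r = σ x (J x)} := by
    refine ⟨0, ?_⟩
    rintro r ⟨u, hu, rfl⟩
    exact (htame u (by intro h; rw [h] at hu; simp at hu)).le
  intro x hx
  have hnx : (0:ℝ) < ‖x‖ := norm_pos_iff.mpr hx
  -- α lower bound for σ x (J x)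
  have hαx : alphaT (⇑J) σ * ‖x‖ ^ 2 ≤ σ x (J x) := by
    have hne : ‖x‖ ≠ 0 := hnx.ne'
    have hu : ‖(‖x‖⁻¹ • x)‖ = 1 := by
      rw [norm_smul, norm_inv, norm_norm]
      field_simp
    have h1 : alphaT (⇑J) σ ≤ σ (‖x‖⁻¹ • x) (J (‖x‖⁻¹ • x)) :=
      csInf_le hbddB ⟨_, hu, rfl⟩
    have h2 : σ (‖x‖⁻¹ • x) (J (‖x‖⁻¹ • x)) = ‖x‖⁻¹ * (‖x‖⁻¹ * σ x (J x)) := by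
      simp [map_smul]
    rw [h2] at h1
    have h3 := mul_le_mul_of_nonneg_right h1 (sq_nonneg ‖x‖)
    have hinv : ‖x‖⁻¹ * ‖x‖ = 1 := inv_mul_cancel₀ hne
    have h4 : ‖x‖⁻¹ * (‖x‖⁻¹ * σ x (J x)) * ‖x‖ ^ 2 = σ x (J x) := by
      calc ‖x‖⁻¹ * (‖x‖⁻¹ * σ x (J x)) * ‖x‖ ^ 2
          = σ x (J x) * ((‖x‖⁻¹ * ‖x‖) * (‖x‖⁻¹ * ‖x‖)) := by ring
        _ = σ x (J x) := by rw [hinv]; ring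
    linarith [h4 ▸ h3]
  -- x and J x are linearly independent
  have hliJ : LinearIndependent ℝ ![x, J x] := by
    rw [LinearIndependent.pair_iff]
    intro s t hst
    have h1 : σ x (s • x + t • J x) = t * σ x (J x) := by
      simp [map_add, map_smul, halt]
    rw [hst] at h1
    simp only [map_zero] at h1
    have ht : t = 0 := by
      rcases mul_eq_zero.mp h1.symm with h | h
      · exact h
      · exact absurd h (ne_of_gt (htame x hx))
    subst ht
    simp only [zero_smul, add_zero, smul_eq_zero] at hst
    exact ⟨hst.resolve_right hx, rfl⟩
  -- β ≥ 0
  have hβ0 : (0:ℝ) ≤ betaT σ := by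
    have hel : σ x (J x) / Real.sqrt (‖x‖ ^ 2 * ‖J x‖ ^ 2 - (inner ℝ x (J x) : ℝ) ^ 2)
        ∈ {r : ℝ | ∃ x y : V, LinearIndependent ℝ ![x, y] ∧
          r = σ x y / Real.sqrt (‖x‖ ^ 2 * ‖y‖ ^ 2 - (inner ℝ x y : ℝ) ^ 2)} :=
      ⟨x, J x, hliJ, rfl⟩
    have h1 : σ x (J x) / Real.sqrt (‖x‖ ^ 2 * ‖J x‖ ^ 2 - (inner ℝ x (J x) : ℝ) ^ 2)
        ≤ betaT σ := le_csSup hbddA hel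
    have h2 : 0 ≤ σ x (J x) / Real.sqrt (‖x‖ ^ 2 * ‖J x‖ ^ 2 - (inner ℝ x (J x) : ℝ) ^ 2) :=
      div_nonneg (htame x hx).le (Real.sqrt_nonneg _)
    linarith
  -- the perturbation term
  set y : V := K x - J x with hy
  have hyn : ‖y‖ ≤ ‖K - J‖ * ‖x‖ := by
    have h1 : y = (K - J) x := by simp [hy]
    rw [h1]
    exact (K - J).le_opNorm x
  have hKJ0 : (0:ℝ) ≤ ‖K - J‖ := norm_nonneg _
  have key : -(betaT σ * (‖K - J‖ * ‖x‖ ^ 2)) ≤ σ x y := by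
    by_cases hcy : ∃ c : ℝ, y = c • x
    · obtain ⟨c, hc⟩ := hcy
      have h1 : σ x y = 0 := by rw [hc]; simp [map_smul, halt]
      rw [h1]
      have : (0:ℝ) ≤ betaT σ * (‖K - J‖ * ‖x‖ ^ 2) := by positivity
      linarith
    · have hyne : y ≠ 0 := by
        intro h0
        exact hcy ⟨0, by simp [h0]⟩
      have hli2 : LinearIndependent ℝ ![y, x] := by
        rw [LinearIndependent.pair_iff]
        intro s t hst
        by_cases hs : s = 0
        · subst hs
          simp only [zero_smul, zero_add, smul_eq_zero] at hst
          exact ⟨rfl, hst.resolve_right hx⟩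
        · exfalso
          apply hcy
          refine ⟨-(t / s), ?_⟩
          have h1 : s • y = -(t • x) := (neg_eq_of_add_eq_zero_left hst).symm
          apply smul_right_injective V hs
          show s • y = s • ((-(t / s)) • x)
          rw [h1, smul_smul, show s * -(t / s) = -t from by field_simp, neg_smul]
      have hDpos : 0 < ‖y‖ ^ 2 * ‖x‖ ^ 2 - (inner ℝ y x : ℝ) ^ 2 := auxDpos y x hli2
      have hsq : (0:ℝ) < Real.sqrt (‖y‖ ^ 2 * ‖x‖ ^ 2 - (inner ℝ y x : ℝ) ^ 2) :=
        Real.sqrt_pos.mpr hDpos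
      have hel : σ y x / Real.sqrt (‖y‖ ^ 2 * ‖x‖ ^ 2 - (inner ℝ y x : ℝ) ^ 2)
          ∈ {r : ℝ | ∃ x y : V, LinearIndependent ℝ ![x, y] ∧
            r = σ x y / Real.sqrt (‖x‖ ^ 2 * ‖y‖ ^ 2 - (inner ℝ x y : ℝ) ^ 2)} :=
        ⟨y, x, hli2, rfl⟩
      have h1 : σ y x / Real.sqrt (‖y‖ ^ 2 * ‖x‖ ^ 2 - (inner ℝ y x : ℝ) ^ 2)
        ≤ betaT σ := le_csSup hbddA hel
      have h2 : σ y x ≤ betaT σ * Real.sqrt (‖y‖ ^ 2 * ‖x‖ ^ 2 - (inner ℝ y x : ℝ) ^ 2) :=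
        (div_le_iff₀ hsq).mp h1
      have h3 : Real.sqrt (‖y‖ ^ 2 * ‖x‖ ^ 2 - (inner ℝ y x : ℝ) ^ 2) ≤ ‖y‖ * ‖x‖ := by
        have h4 : ‖y‖ ^ 2 * ‖x‖ ^ 2 - (inner ℝ y x : ℝ) ^ 2 ≤ (‖y‖ * ‖x‖) ^ 2 := by
          nlinarith [sq_nonneg (inner ℝ y x : ℝ)]
        calc Real.sqrt (‖y‖ ^ 2 * ‖x‖ ^ 2 - (inner ℝ y x : ℝ) ^ 2)
            ≤ Real.sqrt ((‖y‖ * ‖x‖) ^ 2) := Real.sqrt_le_sqrt h4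
          _ = ‖y‖ * ‖x‖ := Real.sqrt_sq (by positivity)
      have h5 : σ y x ≤ betaT σ * (‖K - J‖ * ‖x‖ ^ 2) := by
        have h6 : ‖y‖ * ‖x‖ ≤ ‖K - J‖ * ‖x‖ * ‖x‖ :=
          mul_le_mul_of_nonneg_right hyn (norm_nonneg x)
        nlinarith [Real.sqrt_nonneg (‖y‖ ^ 2 * ‖x‖ ^ 2 - (inner ℝ y x : ℝ) ^ 2)]
      have h7 : σ x y = - σ y x := hskew x y
      linarith
  -- combine
  have hKx : K x = J x + y := by simp [hy]
  have hsum : σ x (K x) = σ x (J x) + σ x y := by rw [hKx, map_add]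
  have hfin : betaT σ * (‖K - J‖ * ‖x‖ ^ 2) < alphaT (⇑J) σ * ‖x‖ ^ 2 := by
    have := mul_lt_mul_of_pos_right hnorm (by positivity : (0:ℝ) < ‖x‖ ^ 2)
    nlinarith
  linarith
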